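/- arXiv:2310.15341 — 2 statements merged into one kernel-verified Lean document; each statement's English description precedes it below -/
import Mathlib

section
/- Let n be an odd positive integer, K = (n+1)/2, and consider the uniform mesh where all cell half-widths are equal: p₁ = ⋯ = p_K = q₁ = ⋯ = q_K = h > 0. Then the associated Q² spectral element matrix L̄_h for the Laplacian with Dirichlet boundary conditions is invertible and L̄_h⁻¹ ≥ 0 entrywise. -/
open Matrix

/-- The `Q²` spectral element operator for the Laplacian with Dirichlet boundary
conditions on the uniform mesh with grid spacing `h`, applied to `u` at grid point `(i,j)`. -/
noncomputable def LhOpUnif (n : ℕ) (h : ℝ) (u : ℕ → ℕ → ℝ) (i j : ℕ) : ℝ :=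
  if i = 0 ∨ i = n + 1 ∨ j = 0 ∨ j = n + 1 then u i j
  else if i % 2 = 1 then
    if j % 2 = 1 then
      -- cell center
      (-u (i - 1) j - u (i + 1) j + 4 * u i j - u i (j + 1) - u i (j - 1)) / h ^ 2
    else
      -- edge center, edge parallel to the x-axis
      (-u (i - 1) j + 2 * u i j - u (i + 1) j) / h ^ 2
        + (u i (j - 2) - 8 * u i (j - 1) + 14 * u i j - 8 * u i (j + 1) + u i (j + 2))
          / (4 * h ^ 2)
  else
    if j % 2 = 1 then
      -- edge center, edge parallel to the y-axis
      (u (i - 2) j - 8 * u (i - 1) j + 14 * u i j - 8 * u (i + 1) j + u (i + 2) j) / (4 * h ^ 2)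
        + (-u i (j - 1) + 2 * u i j - u i (j + 1)) / h ^ 2
    else
      -- knot
      (u (i - 2) j - 8 * u (i - 1) j + 14 * u i j - 8 * u (i + 1) j + u (i + 2) j) / (4 * h ^ 2)
        + (u i (j - 2) - 8 * u i (j - 1) + 14 * u i j - 8 * u i (j + 1) + u i (j + 2))
          / (4 * h ^ 2)

/-- The matrix `L̄_h` of the uniform-mesh `Q²` spectral element operator, acting on
`ℝ^{(n+2)×(n+2)}`, obtained by applying the operator to the standard basis vectors. -/
noncomputable def LhMatUnif (n : ℕ) (h : ℝ) :
    Matrix (Fin (n + 2) × Fin (n + 2)) (Fin (n + 2) × Fin (n + 2)) ℝ :=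
  Matrix.of fun x y =>
    LhOpUnif n h (fun a b => if a = (y.1 : ℕ) ∧ b = (y.2 : ℕ) then 1 else 0) (x.1 : ℕ) (x.2 : ℕ)

lemma op_sub_smul (n : ℕ) (h : ℝ) (u w : ℕ → ℕ → ℝ) (c : ℝ) (i j : ℕ) :
    LhOpUnif n h (fun a b => u a b - c * w a b) i j
      = LhOpUnif n h u i j - c * LhOpUnif n h w i j := by
  unfold LhOpUnif
  split_ifs <;> ring

lemma op_smul (n : ℕ) (h : ℝ) (u : ℕ → ℕ → ℝ) (c : ℝ) (i j : ℕ) :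
    LhOpUnif n h (fun a b => c * u a b) i j = c * LhOpUnif n h u i j := by
  unfold LhOpUnif
  split_ifs <;> ring

lemma op_zero (n : ℕ) (h : ℝ) (i j : ℕ) :
    LhOpUnif n h (fun _ _ => 0) i j = 0 := by
  unfold LhOpUnif
  split_ifs <;> ring

lemma op_add (n : ℕ) (h : ℝ) (u v : ℕ → ℕ → ℝ) (i j : ℕ) :
    LhOpUnif n h (fun a b => u a b + v a b) i j
      = LhOpUnif n h u i j + LhOpUnif n h v i j := by
  unfold LhOpUnif
  split_ifs <;> ring

lemma op_bdry (n : ℕ) (h : ℝ) (u : ℕ → ℕ → ℝ) (i j : ℕ)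
    (hb : i = 0 ∨ i = n + 1 ∨ j = 0 ∨ j = n + 1) :
    LhOpUnif n h u i j = u i j := by
  unfold LhOpUnif; rw [if_pos hb]

lemma op_center (n : ℕ) (h : ℝ) (u : ℕ → ℕ → ℝ) (i j : ℕ)
    (hi : i % 2 = 1) (hj : j % 2 = 1) (hi2 : i ≤ n) (hj2 : j ≤ n) :
    LhOpUnif n h u i j
      = (-u (i - 1) j - u (i + 1) j + 4 * u i j - u i (j + 1) - u i (j - 1)) / h ^ 2 := by
  unfold LhOpUnif; rw [if_neg (by omega), if_pos hi, if_pos hj]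

lemma op_edgeX (n : ℕ) (h : ℝ) (u : ℕ → ℕ → ℝ) (i j : ℕ)
    (hi : i % 2 = 0) (hj : j % 2 = 1) (hi1 : 1 ≤ i) (hi2 : i ≤ n) (hj2 : j ≤ n) :
    LhOpUnif n h u i j
      = (u (i - 2) j - 8 * u (i - 1) j + 14 * u i j - 8 * u (i + 1) j + u (i + 2) j) / (4 * h ^ 2)
        + (-u i (j - 1) + 2 * u i j - u i (j + 1)) / h ^ 2 := by
  unfold LhOpUnif; rw [if_neg (by omega), if_neg (by omega), if_pos hj]

lemma op_edgeY (n : ℕ) (h : ℝ) (u : ℕ → ℕ → ℝ) (i j : ℕ)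
    (hi : i % 2 = 1) (hj : j % 2 = 0) (hi2 : i ≤ n) (hj1 : 1 ≤ j) (hj2 : j ≤ n) :
    LhOpUnif n h u i j
      = (-u (i - 1) j + 2 * u i j - u (i + 1) j) / h ^ 2
        + (u i (j - 2) - 8 * u i (j - 1) + 14 * u i j - 8 * u i (j + 1) + u i (j + 2))
          / (4 * h ^ 2) := by
  unfold LhOpUnif; rw [if_neg (by omega), if_pos hi, if_neg (by omega)]

lemma op_knot (n : ℕ) (h : ℝ) (u : ℕ → ℕ → ℝ) (i j : ℕ)
    (hi : i % 2 = 0) (hj : j % 2 = 0) (hi1 : 1 ≤ i) (hi2 : i ≤ n) (hj1 : 1 ≤ j) (hj2 : j ≤ n) :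
    LhOpUnif n h u i j
      = (u (i - 2) j - 8 * u (i - 1) j + 14 * u i j - 8 * u (i + 1) j + u (i + 2) j) / (4 * h ^ 2)
        + (u i (j - 2) - 8 * u i (j - 1) + 14 * u i j - 8 * u i (j + 1) + u i (j + 2))
          / (4 * h ^ 2) := by
  unfold LhOpUnif; rw [if_neg (by omega), if_neg (by omega), if_neg (by omega)]

noncomputable def wfun (n : ℕ) (a b : ℕ) : ℝ :=
  1 + (a : ℝ) * ((n : ℝ) + 1 - (a : ℝ)) + (b : ℝ) * ((n : ℝ) + 1 - (b : ℝ))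

lemma opw_center (n : ℕ) (h : ℝ) (i j : ℕ) (hh : h ≠ 0)
    (hi : i % 2 = 1) (hj : j % 2 = 1) (hi2 : i ≤ n) (hj2 : j ≤ n) :
    LhOpUnif n h (wfun n) i j = 4 / h ^ 2 := by
  rw [op_center n h _ i j hi hj hi2 hj2]
  have hi1 : 1 ≤ i := by omega
  have hj1 : 1 ≤ j := by omega
  simp only [wfun, Nat.cast_sub hi1, Nat.cast_sub hj1]
  push_cast
  field_simp
  ring

lemma opw_edgeX (n : ℕ) (h : ℝ) (i j : ℕ) (hh : h ≠ 0)
    (hi : i % 2 = 0) (hj : j % 2 = 1) (hi1 : 1 ≤ i) (hi2 : i ≤ n) (hj2 : j ≤ n) :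
    LhOpUnif n h (wfun n) i j = 4 / h ^ 2 := by
  rw [op_edgeX n h _ i j hi hj hi1 hi2 hj2]
  have hi1' : 2 ≤ i := by omega
  have hj1 : 1 ≤ j := by omega
  simp only [wfun, Nat.cast_sub hi1', Nat.cast_sub (show 1 ≤ i by omega), Nat.cast_sub hj1]
  push_cast
  field_simp
  ring

lemma opw_edgeY (n : ℕ) (h : ℝ) (i j : ℕ) (hh : h ≠ 0)
    (hi : i % 2 = 1) (hj : j % 2 = 0) (hi2 : i ≤ n) (hj1 : 1 ≤ j) (hj2 : j ≤ n) :
    LhOpUnif n h (wfun n) i j = 4 / h ^ 2 := by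
  rw [op_edgeY n h _ i j hi hj hi2 hj1 hj2]
  have hj1' : 2 ≤ j := by omega
  simp only [wfun, Nat.cast_sub hj1', Nat.cast_sub (show 1 ≤ i by omega),
    Nat.cast_sub (show 1 ≤ j by omega)]
  push_cast
  field_simp
  ring

lemma opw_knot (n : ℕ) (h : ℝ) (i j : ℕ) (hh : h ≠ 0)
    (hi : i % 2 = 0) (hj : j % 2 = 0) (hi1 : 1 ≤ i) (hi2 : i ≤ n) (hj1 : 1 ≤ j) (hj2 : j ≤ n) :
    LhOpUnif n h (wfun n) i j = 4 / h ^ 2 := by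
  rw [op_knot n h _ i j hi hj hi1 hi2 hj1 hj2]
  simp only [wfun, Nat.cast_sub (show 2 ≤ i by omega), Nat.cast_sub (show 1 ≤ i by omega),
    Nat.cast_sub (show 2 ≤ j by omega), Nat.cast_sub (show 1 ≤ j by omega)]
  push_cast
  field_simp
  ring

lemma wfun_pos (n : ℕ) (a b : ℕ) (ha : a ≤ n + 1) (hb : b ≤ n + 1) :
    0 < wfun n a b := by
  have h1 : (a : ℝ) ≤ (n : ℝ) + 1 := by exact_mod_cast ha
  have h2 : (b : ℝ) ≤ (n : ℝ) + 1 := by exact_mod_cast hb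
  have h3 : (0:ℝ) ≤ a := Nat.cast_nonneg a
  have h4 : (0:ℝ) ≤ b := Nat.cast_nonneg b
  have := mul_nonneg h3 (by linarith : (0:ℝ) ≤ (n:ℝ) + 1 - a)
  have := mul_nonneg h4 (by linarith : (0:ℝ) ≤ (n:ℝ) + 1 - b)
  unfold wfun; linarith

lemma case_center (n : ℕ) (h : ℝ) (V : ℕ → ℕ → ℝ) (i j : ℕ) (hh : 0 < h)
    (hi : i % 2 = 1) (hj : j % 2 = 1) (hi2 : i ≤ n) (hj2 : j ≤ n)
    (hV : ∀ a b, a ≤ n + 1 → b ≤ n + 1 → 0 ≤ V a b) (h0 : V i j = 0) :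
    LhOpUnif n h V i j ≤ 0 := by
  rw [op_center n h V i j hi hj hi2 hj2, h0]
  have b1 := hV (i-1) j (by omega) (by omega)
  have b2 := hV (i+1) j (by omega) (by omega)
  have b3 := hV i (j-1) (by omega) (by omega)
  have b4 := hV i (j+1) (by omega) (by omega)
  apply div_nonpos_of_nonpos_of_nonneg (by linarith) (by positivity)

lemma case_edgeX (n : ℕ) (h : ℝ) (V : ℕ → ℕ → ℝ) (i j : ℕ) (hh : 0 < h)
    (hi : i % 2 = 0) (hj : j % 2 = 1) (hi1 : 2 ≤ i) (hi2 : i + 1 ≤ n) (hj2 : j ≤ n)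
    (hV : ∀ a b, a ≤ n + 1 → b ≤ n + 1 → 0 ≤ V a b) (h0 : V i j = 0) :
    LhOpUnif n h V i j
      + (LhOpUnif n h V (i-1) j + LhOpUnif n h V (i+1) j) / 4 ≤ 0 := by
  have hne : h ≠ 0 := ne_of_gt hh
  rw [op_edgeX n h V i j hi hj (by omega) (by omega) hj2,
      op_center n h V (i-1) j (by omega) hj (by omega) hj2,
      op_center n h V (i+1) j (by omega) hj (by omega) hj2]
  have e1 : i - 1 - 1 = i - 2 := by omega
  have e2 : i - 1 + 1 = i := by omega
  have e3 : i + 1 - 1 = i := by omega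
  rw [e1, e2, e3, h0]
  have key : (V (i - 2) j - 8 * V (i - 1) j + 14 * 0 - 8 * V (i + 1) j + V (i + 2) j) / (4 * h ^ 2)
        + (-V i (j - 1) + 2 * 0 - V i (j + 1)) / h ^ 2
      + ((-V (i - 2) j - 0 + 4 * V (i - 1) j - V (i - 1) (j + 1) - V (i - 1) (j - 1)) / h ^ 2
        + (-0 - V (i + 2) j + 4 * V (i + 1) j - V (i + 1) (j + 1) - V (i + 1) (j - 1)) / h ^ 2) / 4
      = -((4 * (V (i-1) j + V (i+1) j + V i (j-1) + V i (j+1))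
          + (V (i-1) (j-1) + V (i-1) (j+1) + V (i+1) (j-1) + V (i+1) (j+1))) / (4 * h ^ 2)) := by
    field_simp
    ring
  rw [key]
  have b1 := hV (i-1) j (by omega) (by omega)
  have b2 := hV (i+1) j (by omega) (by omega)
  have b3 := hV i (j-1) (by omega) (by omega)
  have b4 := hV i (j+1) (by omega) (by omega)
  have b5 := hV (i-1) (j-1) (by omega) (by omega)
  have b6 := hV (i-1) (j+1) (by omega) (by omega)
  have b7 := hV (i+1) (j-1) (by omega) (by omega)
  have b8 := hV (i+1) (j+1) (by omega) (by omega)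
  have : 0 ≤ (4 * (V (i-1) j + V (i+1) j + V i (j-1) + V i (j+1))
          + (V (i-1) (j-1) + V (i-1) (j+1) + V (i+1) (j-1) + V (i+1) (j+1))) / (4 * h ^ 2) := by
    apply div_nonneg (by linarith) (by positivity)
  linarith

lemma case_edgeY (n : ℕ) (h : ℝ) (V : ℕ → ℕ → ℝ) (i j : ℕ) (hh : 0 < h)
    (hi : i % 2 = 1) (hj : j % 2 = 0) (hi2 : i ≤ n) (hj1 : 2 ≤ j) (hj2 : j + 1 ≤ n)
    (hV : ∀ a b, a ≤ n + 1 → b ≤ n + 1 → 0 ≤ V a b) (h0 : V i j = 0) :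
    LhOpUnif n h V i j
      + (LhOpUnif n h V i (j-1) + LhOpUnif n h V i (j+1)) / 4 ≤ 0 := by
  have hne : h ≠ 0 := ne_of_gt hh
  have key : LhOpUnif n h V i j
      + (LhOpUnif n h V i (j-1) + LhOpUnif n h V i (j+1)) / 4
      = -((4 * (V i (j-1) + V i (j+1) + V (i-1) j + V (i+1) j)
          + (V (i-1) (j-1) + V (i+1) (j-1) + V (i-1) (j+1) + V (i+1) (j+1))) / (4 * h ^ 2)) := by
    rw [op_edgeY n h V i j hi hj hi2 (by omega) (by omega),
        op_center n h V i (j-1) hi (by omega) hi2 (by omega),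
        op_center n h V i (j+1) hi (by omega) hi2 (by omega)]
    have f1 : j - 1 - 1 = j - 2 := by omega
    have f2 : j - 1 + 1 = j := by omega
    have f3 : j + 1 - 1 = j := by omega
    rw [f1, f2, f3, h0]
    field_simp
    ring
  rw [key]
  have b1 := hV i (j-1) (by omega) (by omega)
  have b2 := hV i (j+1) (by omega) (by omega)
  have b3 := hV (i-1) j (by omega) (by omega)
  have b4 := hV (i+1) j (by omega) (by omega)
  have b5 := hV (i-1) (j-1) (by omega) (by omega)
  have b6 := hV (i+1) (j-1) (by omega) (by omega)
  have b7 := hV (i-1) (j+1) (by omega) (by omega)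
  have b8 := hV (i+1) (j+1) (by omega) (by omega)
  simp only [neg_nonpos]
  apply div_nonneg (by linarith) (by positivity)

lemma case_knot (n : ℕ) (h : ℝ) (V : ℕ → ℕ → ℝ) (i j : ℕ) (hh : 0 < h)
    (hi : i % 2 = 0) (hj : j % 2 = 0) (hi1 : 2 ≤ i) (hi2 : i + 1 ≤ n)
    (hj1 : 2 ≤ j) (hj2 : j + 1 ≤ n)
    (hV : ∀ a b, a ≤ n + 1 → b ≤ n + 1 → 0 ≤ V a b) (h0 : V i j = 0) :
    LhOpUnif n h V i j
      + (LhOpUnif n h V (i-1) j + LhOpUnif n h V (i+1) j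
         + LhOpUnif n h V i (j-1) + LhOpUnif n h V i (j+1)) / 4
      + (LhOpUnif n h V (i-1) (j-1) + LhOpUnif n h V (i-1) (j+1)
         + LhOpUnif n h V (i+1) (j-1) + LhOpUnif n h V (i+1) (j+1)) / 8 ≤ 0 := by
  have hne : h ≠ 0 := ne_of_gt hh
  have key : LhOpUnif n h V i j
      + (LhOpUnif n h V (i-1) j + LhOpUnif n h V (i+1) j
         + LhOpUnif n h V i (j-1) + LhOpUnif n h V i (j+1)) / 4
      + (LhOpUnif n h V (i-1) (j-1) + LhOpUnif n h V (i-1) (j+1)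
         + LhOpUnif n h V (i+1) (j-1) + LhOpUnif n h V (i+1) (j+1)) / 8
      = -((14 * (V (i-1) j + V (i+1) j + V i (j-1) + V i (j+1))
          + 8 * (V (i-1) (j-1) + V (i-1) (j+1) + V (i+1) (j-1) + V (i+1) (j+1))
          + (V (i-2) (j-1) + V (i-2) (j+1) + V (i+2) (j-1) + V (i+2) (j+1)
             + V (i-1) (j-2) + V (i-1) (j+2) + V (i+1) (j-2) + V (i+1) (j+2)))
          / (16 * h ^ 2)) := by
    rw [op_knot n h V i j hi hj (by omega) (by omega) (by omega) (by omega),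
        op_edgeY n h V (i-1) j (by omega) hj (by omega) (by omega) (by omega),
        op_edgeY n h V (i+1) j (by omega) hj (by omega) (by omega) (by omega),
        op_edgeX n h V i (j-1) hi (by omega) (by omega) (by omega) (by omega),
        op_edgeX n h V i (j+1) hi (by omega) (by omega) (by omega) (by omega),
        op_center n h V (i-1) (j-1) (by omega) (by omega) (by omega) (by omega),
        op_center n h V (i-1) (j+1) (by omega) (by omega) (by omega) (by omega),
        op_center n h V (i+1) (j-1) (by omega) (by omega) (by omega) (by omega),
        op_center n h V (i+1) (j+1) (by omega) (by omega) (by omega) (by omega)]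
    have e1 : i - 1 - 1 = i - 2 := by omega
    have e2 : i - 1 + 1 = i := by omega
    have e3 : i + 1 - 1 = i := by omega
    have e4 : i + 1 + 1 = i + 2 := by omega
    have f1 : j - 1 - 1 = j - 2 := by omega
    have f2 : j - 1 + 1 = j := by omega
    have f3 : j + 1 - 1 = j := by omega
    have f4 : j + 1 + 1 = j + 2 := by omega
    rw [e1, e2, e3, e4, f1, f2, f3, f4, h0]
    field_simp
    ring
  rw [key]
  have b1 := hV (i-1) j (by omega) (by omega)
  have b2 := hV (i+1) j (by omega) (by omega)
  have b3 := hV i (j-1) (by omega) (by omega)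
  have b4 := hV i (j+1) (by omega) (by omega)
  have b5 := hV (i-1) (j-1) (by omega) (by omega)
  have b6 := hV (i-1) (j+1) (by omega) (by omega)
  have b7 := hV (i+1) (j-1) (by omega) (by omega)
  have b8 := hV (i+1) (j+1) (by omega) (by omega)
  have c1 := hV (i-2) (j-1) (by omega) (by omega)
  have c2 := hV (i-2) (j+1) (by omega) (by omega)
  have c3 := hV (i+2) (j-1) (by omega) (by omega)
  have c4 := hV (i+2) (j+1) (by omega) (by omega)
  have c5 := hV (i-1) (j-2) (by omega) (by omega)
  have c6 := hV (i-1) (j+2) (by omega) (by omega)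
  have c7 := hV (i+1) (j-2) (by omega) (by omega)
  have c8 := hV (i+1) (j+2) (by omega) (by omega)
  simp only [neg_nonpos]
  apply div_nonneg (by linarith) (by positivity)

lemma key_dmp (n : ℕ) (hodd : Odd n) (hn : 0 < n) (h : ℝ) (hh : 0 < h)
    (U : ℕ → ℕ → ℝ)
    (hf : ∀ i j, i ≤ n + 1 → j ≤ n + 1 → 0 ≤ LhOpUnif n h U i j) :
    ∀ i j, i ≤ n + 1 → j ≤ n + 1 → 0 ≤ U i j := by
  by_contra hc
  push_neg at hc
  obtain ⟨i, j, hi, hj, hU⟩ := hc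
  have hne : h ≠ 0 := ne_of_gt hh
  obtain ⟨m, hm⟩ := hodd
  set s : Finset (ℕ × ℕ) := Finset.range (n+2) ×ˢ Finset.range (n+2) with hs
  have hsne : s.Nonempty := ⟨(0,0), by simp [hs]⟩
  set F : ℕ × ℕ → ℝ := fun p => U p.1 p.2 / wfun n p.1 p.2 with hF
  set t := s.inf' hsne F with htdef
  have hmem : (i, j) ∈ s := by
    simp only [hs, Finset.mem_product, Finset.mem_range]; omega
  have ht_le : t ≤ F (i, j) := Finset.inf'_le F hmem
  have hwij := wfun_pos n i j hi hj
  have ht : t < 0 := by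
    refine lt_of_le_of_lt ht_le ?_
    simp only [hF]
    exact div_neg_of_neg_of_pos hU hwij
  obtain ⟨p₀, hp₀s, hp₀⟩ := Finset.exists_mem_eq_inf' hsne F
  obtain ⟨i₀, j₀⟩ := p₀
  have hi₀ : i₀ ≤ n + 1 := by
    simp only [hs, Finset.mem_product, Finset.mem_range] at hp₀s; omega
  have hj₀ : j₀ ≤ n + 1 := by
    simp only [hs, Finset.mem_product, Finset.mem_range] at hp₀s; omega
  set V : ℕ → ℕ → ℝ := fun a b => U a b - t * wfun n a b with hVdef
  have hV : ∀ a b, a ≤ n + 1 → b ≤ n + 1 → 0 ≤ V a b := by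
    intro a b ha hb
    have hw := wfun_pos n a b ha hb
    have h1 : t ≤ F (a, b) := Finset.inf'_le F (by
      simp only [hs, Finset.mem_product, Finset.mem_range]; omega)
    simp only [hF] at h1
    have h2 : t * wfun n a b ≤ U a b := (le_div_iff₀ hw).mp h1
    simp only [hVdef]
    linarith
  have hw₀ := wfun_pos n i₀ j₀ hi₀ hj₀
  have hV0 : V i₀ j₀ = 0 := by
    have h1 : t = U i₀ j₀ / wfun n i₀ j₀ := by
      rw [htdef, hp₀]
    have h2 : U i₀ j₀ = t * wfun n i₀ j₀ := by
      rw [h1]; field_simp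
    simp only [hVdef]; linarith
  have hopV : ∀ a b, LhOpUnif n h V a b
      = LhOpUnif n h U a b - t * LhOpUnif n h (wfun n) a b := by
    intro a b
    rw [hVdef]
    exact op_sub_smul n h U (wfun n) t a b
  by_cases hbd : i₀ = 0 ∨ i₀ = n + 1 ∨ j₀ = 0 ∨ j₀ = n + 1
  · have h1 := hf i₀ j₀ hi₀ hj₀
    rw [op_bdry n h U i₀ j₀ hbd] at h1
    have h2 : U i₀ j₀ = t * wfun n i₀ j₀ := by
      have := hV0; simp only [hVdef] at this; linarith
    nlinarith [mul_neg_of_neg_of_pos ht hw₀]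
  · push_neg at hbd
    have hi₀1 : 1 ≤ i₀ := by omega
    have hi₀2 : i₀ ≤ n := by omega
    have hj₀1 : 1 ≤ j₀ := by omega
    have hj₀2 : j₀ ≤ n := by omega
    have hq : t * (4 / h ^ 2) < 0 := mul_neg_of_neg_of_pos ht (by positivity)
    by_cases hpi : i₀ % 2 = 1 <;> by_cases hpj : j₀ % 2 = 1
    · -- center
      have hle := case_center n h V i₀ j₀ hh hpi hpj hi₀2 hj₀2 hV hV0
      rw [hopV, opw_center n h i₀ j₀ hne hpi hpj hi₀2 hj₀2] at hle
      have g0 := hf i₀ j₀ hi₀ hj₀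
      linarith
    · -- edgeY : i₀ odd, j₀ even
      have hpj' : j₀ % 2 = 0 := by omega
      have hle := case_edgeY n h V i₀ j₀ hh hpi hpj' hi₀2 (by omega) (by omega) hV hV0
      rw [hopV i₀ j₀, hopV i₀ (j₀-1), hopV i₀ (j₀+1),
          opw_edgeY n h i₀ j₀ hne hpi hpj' hi₀2 hj₀1 hj₀2,
          opw_center n h i₀ (j₀-1) hne hpi (by omega) hi₀2 (by omega),
          opw_center n h i₀ (j₀+1) hne hpi (by omega) hi₀2 (by omega)] at hle
      have g0 := hf i₀ j₀ hi₀ hj₀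
      have g1 := hf i₀ (j₀-1) hi₀ (by omega)
      have g2 := hf i₀ (j₀+1) hi₀ (by omega)
      linarith
    · -- edgeX : i₀ even, j₀ odd
      have hpi' : i₀ % 2 = 0 := by omega
      have hle := case_edgeX n h V i₀ j₀ hh hpi' hpj (by omega) (by omega) hj₀2 hV hV0
      rw [hopV i₀ j₀, hopV (i₀-1) j₀, hopV (i₀+1) j₀,
          opw_edgeX n h i₀ j₀ hne hpi' hpj hi₀1 hi₀2 hj₀2,
          opw_center n h (i₀-1) j₀ hne (by omega) hpj (by omega) hj₀2,
          opw_center n h (i₀+1) j₀ hne (by omega) hpj (by omega) hj₀2] at hle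
      have g0 := hf i₀ j₀ hi₀ hj₀
      have g1 := hf (i₀-1) j₀ (by omega) hj₀
      have g2 := hf (i₀+1) j₀ (by omega) hj₀
      linarith
    · -- knot
      have hpi' : i₀ % 2 = 0 := by omega
      have hpj' : j₀ % 2 = 0 := by omega
      have hle := case_knot n h V i₀ j₀ hh hpi' hpj' (by omega) (by omega) (by omega)
        (by omega) hV hV0
      rw [hopV i₀ j₀, hopV (i₀-1) j₀, hopV (i₀+1) j₀, hopV i₀ (j₀-1), hopV i₀ (j₀+1),
          hopV (i₀-1) (j₀-1), hopV (i₀-1) (j₀+1), hopV (i₀+1) (j₀-1), hopV (i₀+1) (j₀+1),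
          opw_knot n h i₀ j₀ hne hpi' hpj' hi₀1 hi₀2 hj₀1 hj₀2,
          opw_edgeY n h (i₀-1) j₀ hne (by omega) hpj' (by omega) hj₀1 hj₀2,
          opw_edgeY n h (i₀+1) j₀ hne (by omega) hpj' (by omega) hj₀1 hj₀2,
          opw_edgeX n h i₀ (j₀-1) hne hpi' (by omega) hi₀1 hi₀2 (by omega),
          opw_edgeX n h i₀ (j₀+1) hne hpi' (by omega) hi₀1 hi₀2 (by omega),
          opw_center n h (i₀-1) (j₀-1) hne (by omega) (by omega) (by omega) (by omega),
          opw_center n h (i₀-1) (j₀+1) hne (by omega) (by omega) (by omega) (by omega),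
          opw_center n h (i₀+1) (j₀-1) hne (by omega) (by omega) (by omega) (by omega),
          opw_center n h (i₀+1) (j₀+1) hne (by omega) (by omega) (by omega) (by omega)] at hle
      have g0 := hf i₀ j₀ hi₀ hj₀
      have g1 := hf (i₀-1) j₀ (by omega) hj₀
      have g2 := hf (i₀+1) j₀ (by omega) hj₀
      have g3 := hf i₀ (j₀-1) hi₀ (by omega)
      have g4 := hf i₀ (j₀+1) hi₀ (by omega)
      have g5 := hf (i₀-1) (j₀-1) (by omega) (by omega)
      have g6 := hf (i₀-1) (j₀+1) (by omega) (by omega)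
      have g7 := hf (i₀+1) (j₀-1) (by omega) (by omega)
      have g8 := hf (i₀+1) (j₀+1) (by omega) (by omega)
      linarith

/-- The operator as an additive monoid hom in `u`, for fixed `(i,j)`. -/
noncomputable def opHom (n : ℕ) (h : ℝ) (i j : ℕ) : (ℕ → ℕ → ℝ) →+ ℝ where
  toFun u := LhOpUnif n h u i j
  map_zero' := op_zero n h i j
  map_add' u v := op_add n h u v i j

lemma matrix_mono {N : Type*} [Fintype N] [DecidableEq N] (A : Matrix N N ℝ)
    (hmono : ∀ v : N → ℝ, (∀ x, 0 ≤ A.mulVec v x) → ∀ x, 0 ≤ v x) :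
    IsUnit A.det ∧ ∀ x y, 0 ≤ A⁻¹ x y := by
  have hdet : A.det ≠ 0 := by
    intro h0
    obtain ⟨v, hvne, hv⟩ := Matrix.exists_mulVec_eq_zero_iff.mpr h0
    have h1 := hmono v (fun x => by rw [hv]; exact le_refl 0)
    have h2 := hmono (-v) (by
      intro x
      rw [Matrix.mulVec_neg, hv]
      simp)
    apply hvne
    funext x
    have hx1 := h1 x
    have hx2 := h2 x
    simp only [Pi.neg_apply] at hx2
    have : v x = 0 := le_antisymm (by linarith) hx1
    simpa using this
  have hunit : IsUnit A.det := isUnit_iff_ne_zero.mpr hdet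
  refine ⟨hunit, fun x y => ?_⟩
  have hinv := Matrix.mul_nonsing_inv A hunit
  refine hmono (fun z => A⁻¹ z y) (fun z => ?_) x
  have : A.mulVec (fun z => A⁻¹ z y) z = (A * A⁻¹) z y := by
    simp [Matrix.mulVec, Matrix.mul_apply, dotProduct]
  rw [this, hinv, Matrix.one_apply]
  split <;> norm_num

theorem Q2_monotone_on_uniform_mesh
    (n : ℕ) (hodd : Odd n) (hn : 0 < n) (h : ℝ) (hh : 0 < h) :
    IsUnit (LhMatUnif n h).det ∧ ∀ x y, 0 ≤ (LhMatUnif n h)⁻¹ x y := by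
  apply matrix_mono
  intro v hv x
  classical
  set g : (Fin (n + 2) × Fin (n + 2)) → ℕ → ℕ → ℝ :=
    fun y a b => v y * (if a = (y.1 : ℕ) ∧ b = (y.2 : ℕ) then 1 else 0) with hg
  set U : ℕ → ℕ → ℝ := ∑ y : Fin (n + 2) × Fin (n + 2), g y with hU
  have hUab : ∀ a b, U a b = ∑ y : Fin (n + 2) × Fin (n + 2), g y a b := by
    intro a b
    rw [hU]
    simp [Finset.sum_apply]
  have hopU : ∀ i j : ℕ, LhOpUnif n h U i j
      = ∑ y : Fin (n + 2) × Fin (n + 2), v y *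
          LhOpUnif n h (fun a b => if a = (y.1 : ℕ) ∧ b = (y.2 : ℕ) then 1 else 0) i j := by
    intro i j
    have h1 : LhOpUnif n h U i j = opHom n h i j U := rfl
    rw [h1, hU, map_sum]
    refine Finset.sum_congr rfl fun y _ => ?_
    have h2 : opHom n h i j (g y)
        = LhOpUnif n h (fun a b => v y *
            (if a = (y.1 : ℕ) ∧ b = (y.2 : ℕ) then 1 else 0)) i j := rfl
    rw [h2, op_smul]
  have hf : ∀ i j, i ≤ n + 1 → j ≤ n + 1 → 0 ≤ LhOpUnif n h U i j := by
    intro i j hi hj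
    have hx := hv (⟨i, by omega⟩, ⟨j, by omega⟩)
    rw [hopU]
    have e : (LhMatUnif n h).mulVec v (⟨i, by omega⟩, ⟨j, by omega⟩)
        = ∑ y : Fin (n + 2) × Fin (n + 2), v y *
            LhOpUnif n h (fun a b => if a = (y.1 : ℕ) ∧ b = (y.2 : ℕ) then 1 else 0) i j := by
      simp only [Matrix.mulVec, dotProduct, LhMatUnif, Matrix.of_apply]
      refine Finset.sum_congr rfl fun y _ => ?_
      exact mul_comm _ _
    rw [e] at hx
    exact hx
  have hkey := key_dmp n hodd hn h hh U hf
  have hcol : U (x.1 : ℕ) (x.2 : ℕ) = v x := by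
    rw [hUab, Finset.sum_eq_single x]
    · simp [hg]
    · intro y _ hyx
      rw [hg]
      simp only []
      rw [if_neg, mul_zero]
      rintro ⟨h1, h2⟩
      exact hyx (Prod.ext (Fin.ext h1.symm) (Fin.ext h2.symm))
    · intro hx
      exact absurd (Finset.mem_univ x) hx
  rw [← hcol]
  exact hkey _ _ (by omega) (by omega)
end

section
/- Let A be an n×n real matrix with A𝟙 ≥ 0 and A𝟙 ≠ 0, where 𝟙 is the all-ones vector. Suppose the negative off-diagonal part of A admits a decomposition A_a⁻ = A^z + A^s with A^z ≤ 0 and A^s ≤ 0 entrywise, and there is a diagonal matrix A_{d*} with positive diagonal entries and A_{d*} ≥ A_d entrywise such that: (1) (A_{d*} + A^z)𝟙 ≥ 0, (A_{d*} + A^z)𝟙 ≠ 0, and A_{d*} + A^z connects N⁰((A_{d*} + A^z)𝟙) with N⁺((A_{d*} + A^z)𝟙); (2) A_a⁺ ≤ A^z A_{d*}⁻¹ A^s entrywise; (3) A^z or A^s connects N⁰(A𝟙) with N⁺(A𝟙). Then A is invertible and A⁻¹ ≥ 0 entrywise. -/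
open Matrix

/-- A real square matrix is a nonsingular M-matrix if its off-diagonal entries are
nonpositive, it is invertible, and all entries of its inverse are nonnegative. -/
def IsNonsingMMatrix {n : ℕ} (M : Matrix (Fin n) (Fin n) ℝ) : Prop :=
  (∀ i j, i ≠ j → M i j ≤ 0) ∧ IsUnit M.det ∧ ∀ i j, 0 ≤ M⁻¹ i j

/-- `A` connects `N1` with `N2`: from every index in `N1` there is a path of
nonzero entries of `A` of length `r ≥ 1` ending in `N2`. -/
def Connects {n : ℕ} (A : Matrix (Fin n) (Fin n) ℝ) (N1 N2 : Set (Fin n)) : Prop :=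
  ∀ i0 ∈ N1, ∃ r : ℕ, 1 ≤ r ∧ ∃ path : ℕ → Fin n, path 0 = i0 ∧ path r ∈ N2 ∧
    ∀ k, 1 ≤ k → k ≤ r → A (path (k - 1)) (path k) ≠ 0

/-- `N⁰(v)`, the set of indices where `v` vanishes. -/
def Nzero {n : ℕ} (v : Fin n → ℝ) : Set (Fin n) := {i | v i = 0}

/-- `N⁺(v)`, the set of indices where `v` is positive. -/
def Npos {n : ℕ} (v : Fin n → ℝ) : Set (Fin n) := {i | 0 < v i}

/-- Diagonal part `A_d` of a matrix. -/
noncomputable def diagPart {n : ℕ} (A : Matrix (Fin n) (Fin n) ℝ) : Matrix (Fin n) (Fin n) ℝ :=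
  Matrix.diagonal fun i => A i i

/-- Positive off-diagonal part `A_a⁺` of a matrix. -/
noncomputable def offDiagPos {n : ℕ} (A : Matrix (Fin n) (Fin n) ℝ) : Matrix (Fin n) (Fin n) ℝ :=
  Matrix.of fun i j => if i ≠ j ∧ 0 < A i j then A i j else 0

/-- Negative off-diagonal part `A_a⁻ = A - A_d - A_a⁺` of a matrix. -/
noncomputable def offDiagNeg {n : ℕ} (A : Matrix (Fin n) (Fin n) ℝ) : Matrix (Fin n) (Fin n) ℝ :=
  (A - diagPart A) - offDiagPos A



open Matrix BigOperators Finset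

section aux
variable {n : ℕ}

lemma mulVec_ones (T : Matrix (Fin n) (Fin n) ℝ) (i : Fin n) :
    T.mulVec (fun _ => 1) i = ∑ j, T i j := by
  simp [Matrix.mulVec, dotProduct]

/-- min principle: Z-matrix with strictly positive row sums maps nonneg-preimages to nonneg. -/
lemma zmat_sol_nonneg {T : Matrix (Fin n) (Fin n) ℝ}
    (hZ : ∀ i j, i ≠ j → T i j ≤ 0) (hrow : ∀ i, 0 < ∑ j, T i j)
    {y : Fin n → ℝ} (hy : ∀ i, 0 ≤ T.mulVec y i) : ∀ i, 0 ≤ y i := by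
  by_contra h
  push_neg at h
  obtain ⟨i₀, hi₀⟩ := h
  obtain ⟨i, -, hi⟩ := Finset.exists_min_image Finset.univ y ⟨i₀, Finset.mem_univ _⟩
  have hyi : y i < 0 := lt_of_le_of_lt (hi i₀ (Finset.mem_univ _)) hi₀
  have key : T.mulVec y i ≤ (∑ j, T i j) * y i := by
    rw [Matrix.mulVec, dotProduct, Finset.sum_mul]
    refine Finset.sum_le_sum fun j _ => ?_
    rcases eq_or_ne j i with rfl | hne
    · exact le_rfl
    · nlinarith [hi j (Finset.mem_univ j), hZ i j (Ne.symm hne)]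
  have h2 : (∑ j, T i j) * y i < 0 := mul_neg_of_pos_of_neg (hrow i) hyi
  linarith [hy i]

/-- Z-matrix with strictly positive row sums is a nonsingular M-matrix. -/
lemma zmat_strict {T : Matrix (Fin n) (Fin n) ℝ}
    (hZ : ∀ i j, i ≠ j → T i j ≤ 0) (hrow : ∀ i, 0 < ∑ j, T i j) :
    IsUnit T.det ∧ ∀ i j, 0 ≤ T⁻¹ i j := by
  have hdet : IsUnit T.det := by
    rw [isUnit_iff_ne_zero]
    intro h0
    obtain ⟨v, hv, hTv⟩ := (Matrix.exists_mulVec_eq_zero_iff).2 h0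
    have h1 : ∀ i, 0 ≤ v i := zmat_sol_nonneg hZ hrow (fun i => by rw [hTv]; simp)
    have h2 : ∀ i, 0 ≤ (-v) i := zmat_sol_nonneg hZ hrow
      (fun i => by rw [Matrix.mulVec_neg, hTv]; simp)
    exact hv (funext fun i => le_antisymm (by simpa using h2 i) (h1 i))
  refine ⟨hdet, fun i j => ?_⟩
  have := zmat_sol_nonneg hZ hrow (y := fun k => T⁻¹ k j) (fun i => by
    have : T.mulVec (fun k => T⁻¹ k j) i = (T * T⁻¹) i j := by
      simp [Matrix.mulVec, dotProduct, Matrix.mul_apply]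
    rw [this, Matrix.mul_nonsing_inv T hdet]
    by_cases h : i = j <;> simp [Matrix.one_apply, h])
  exact this i

end aux

section aux2
variable {n : ℕ}

/-- Z-matrix with nonnegative row sums that is invertible has nonnegative inverse. -/
lemma zmat_inv_nonneg {T : Matrix (Fin n) (Fin n) ℝ}
    (hZ : ∀ i j, i ≠ j → T i j ≤ 0) (hrow : ∀ i, 0 ≤ ∑ j, T i j)
    (hdet : IsUnit T.det) : ∀ i j, 0 ≤ T⁻¹ i j := by
  intro i j
  set f : ℝ → Matrix (Fin n) (Fin n) ℝ := fun ε => T + ε • (1 : Matrix (Fin n) (Fin n) ℝ) with hf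
  have hfc : Continuous f := by
    apply continuous_const.add
    exact continuous_id.smul continuous_const
  have hper : ∀ ε : ℝ, 0 < ε → IsUnit (f ε).det ∧ ∀ i j, 0 ≤ (f ε)⁻¹ i j := by
    intro ε hε
    apply zmat_strict
    · intro a b hab
      simp [hf, Matrix.add_apply, Matrix.smul_apply, Matrix.one_apply, hab]
      exact hZ a b hab
    · intro a
      have : ∑ b, (f ε) a b = (∑ b, T a b) + ε := by
        simp [hf, Matrix.add_apply, Matrix.smul_apply, Matrix.one_apply,
          Finset.sum_add_distrib]
      rw [this]
      linarith [hrow a]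
  -- entrywise formula for the inverse
  have hform : ∀ S : Matrix (Fin n) (Fin n) ℝ, S⁻¹ i j = (S.det)⁻¹ * S.adjugate i j := by
    intro S
    rw [Matrix.inv_def, Matrix.smul_apply, Ring.inverse_eq_inv', smul_eq_mul]
  set F : ℝ → ℝ := fun ε => ((f ε).det)⁻¹ * (f ε).adjugate i j with hF
  have hdet0 : (f 0).det = T.det := by simp [hf]
  have hFc : ContinuousAt F 0 := by
    have h1 : Continuous fun ε => (f ε).det := hfc.matrix_det
    have h2 : Continuous fun ε => (f ε).adjugate i j := by
      have := hfc.matrix_adjugate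
      exact (continuous_apply j).comp ((continuous_apply i).comp this)
    apply ContinuousAt.mul
    · exact (h1.continuousAt).inv₀ (by rw [hdet0]; exact hdet.ne_zero)
    · exact h2.continuousAt
  have hFlim : Filter.Tendsto F (nhdsWithin 0 (Set.Ioi 0)) (nhds (F 0)) :=
    (hFc.continuousWithinAt).tendsto
  have hFnn : ∀ᶠ ε in nhdsWithin 0 (Set.Ioi 0), 0 ≤ F ε := by
    filter_upwards [self_mem_nhdsWithin] with ε hε
    have := (hper ε hε).2 i j
    rwa [hform (f ε)] at this
  have h0 : 0 ≤ F 0 := ge_of_tendsto hFlim hFnn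
  have : F 0 = T⁻¹ i j := by
    rw [hF]
    simp only
    rw [← hform (f 0)]
    simp [hf]
  linarith [h0, this.symm.le]

end aux2

section aux3
variable {n : ℕ}

/-- Z-matrix, nonneg row sums, connectivity from zero-rowsum to positive-rowsum indices:
no positive entry in the kernel. -/
lemma zmat_connected_noker {T : Matrix (Fin n) (Fin n) ℝ}
    (hZ : ∀ i j, i ≠ j → T i j ≤ 0) (hrow : ∀ i, 0 ≤ T.mulVec (fun _ => 1) i)
    (hconn : Connects T (Nzero (T.mulVec fun _ => 1)) (Npos (T.mulVec fun _ => 1)))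
    {x : Fin n → ℝ} (hx : T.mulVec x = 0) (i₀ : Fin n) (hpos : 0 < x i₀) : False := by
  obtain ⟨im, -, hmax⟩ := Finset.exists_max_image Finset.univ x ⟨i₀, Finset.mem_univ _⟩
  set m := x im with hmdef
  have hm : 0 < m := lt_of_lt_of_le hpos (hmax i₀ (Finset.mem_univ _))
  have claim : ∀ i, x i = m →
      (T.mulVec (fun _ => 1) i = 0 ∧ ∀ j, T i j ≠ 0 → x j = m) := by
    intro i him
    have e2 : ∑ j, T i j * x j = 0 := by
      have := congrFun hx i
      simpa [Matrix.mulVec, dotProduct] using this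
    have e1 : ∑ j, T i j * (x j - m) = - ((∑ j, T i j) * m) := by
      simp [mul_sub, Finset.sum_sub_distrib, e2, Finset.sum_mul]
    have hterm : ∀ j ∈ Finset.univ, 0 ≤ T i j * (x j - m) := by
      intro j _
      rcases eq_or_ne j i with rfl | hne
      · rw [him]; simp
      · have h1 : T i j ≤ 0 := hZ i j (Ne.symm hne)
        have h2 : x j - m ≤ 0 := by
          have := hmax j (Finset.mem_univ _); linarith
        nlinarith
    have hsnn : 0 ≤ ∑ j, T i j * (x j - m) := Finset.sum_nonneg hterm
    have hrsnn : 0 ≤ ∑ j, T i j := by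
      have := hrow i; rwa [mulVec_ones] at this
    have hrs0 : ∑ j, T i j = 0 := by nlinarith
    have hs0 : ∑ j, T i j * (x j - m) = 0 := by rw [e1, hrs0]; ring
    have hall := (Finset.sum_eq_zero_iff_of_nonneg hterm).1 hs0
    constructor
    · rw [mulVec_ones]; exact hrs0
    · intro j hTij
      have := hall j (Finset.mem_univ _)
      rcases mul_eq_zero.1 this with h | h
      · exact absurd h hTij
      · linarith
  have h0 : T.mulVec (fun _ => 1) im = 0 := (claim im rfl).1
  obtain ⟨r, hr, p, hp0, hpr, hstep⟩ := hconn im h0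
  have hind : ∀ k, k ≤ r → x (p k) = m := by
    intro k
    induction k with
    | zero => intro _; rw [hp0]
    | succ k ih =>
      intro hk
      have h1 := ih (Nat.le_of_succ_le hk)
      have h2 := hstep (k + 1) (Nat.succ_le_succ (Nat.zero_le k)) hk
      simp only [Nat.add_sub_cancel] at h2
      exact (claim _ h1).2 _ h2
  have hxr := hind r le_rfl
  have h4 : T.mulVec (fun _ => 1) (p r) = 0 := (claim _ hxr).1
  have h5 : 0 < T.mulVec (fun _ => 1) (p r) := hpr
  linarith

/-- entrywise nonneg is preserved under matrix product -/
lemma matmul_nonneg {P Q : Matrix (Fin n) (Fin n) ℝ}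
    (hP : ∀ i j, 0 ≤ P i j) (hQ : ∀ i j, 0 ≤ Q i j) : ∀ i j, 0 ≤ (P * Q) i j := by
  intro i j
  rw [Matrix.mul_apply]
  exact Finset.sum_nonneg fun k _ => mul_nonneg (hP i k) (hQ k j)

end aux3

theorem relaxed_lorenz_with_ones_vector
    {n : ℕ} (A Az As Ads : Matrix (Fin n) (Fin n) ℝ)
    (hrow : ∀ i, 0 ≤ A.mulVec (fun _ => 1) i)
    (hrow0 : A.mulVec (fun _ => 1) ≠ 0)
    (hdecomp : offDiagNeg A = Az + As)
    (hAz : ∀ i j, Az i j ≤ 0) (hAs : ∀ i j, As i j ≤ 0)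
    (hdiag : ∀ i j, i ≠ j → Ads i j = 0)
    (hdpos : ∀ i, 0 < Ads i i)
    (hge : ∀ i j, diagPart A i j ≤ Ads i j)
    (h1a : ∀ i, 0 ≤ (Ads + Az).mulVec (fun _ => 1) i)
    (h1b : (Ads + Az).mulVec (fun _ => 1) ≠ 0)
    (h1c : Connects (Ads + Az) (Nzero ((Ads + Az).mulVec fun _ => 1))
      (Npos ((Ads + Az).mulVec fun _ => 1)))
    (h2 : ∀ i j, offDiagPos A i j ≤ (Az * Ads⁻¹ * As) i j)
    (h3 : Connects Az (Nzero (A.mulVec fun _ => 1)) (Npos (A.mulVec fun _ => 1)) ∨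
      Connects As (Nzero (A.mulVec fun _ => 1)) (Npos (A.mulVec fun _ => 1))) :
    IsUnit A.det ∧ ∀ i j, 0 ≤ A⁻¹ i j := by
  -- notation
  set v : Fin n → ℝ := fun i => Ads i i with hv
  have hvpos : ∀ i, 0 < v i := hdpos
  have hvne : ∀ i, v i ≠ 0 := fun i => ne_of_gt (hvpos i)
  have hD : Ads = Matrix.diagonal v := by
    ext i j
    by_cases h : i = j
    · subst h; simp [Matrix.diagonal_apply_eq, hv]
    · simp [Matrix.diagonal_apply_ne _ h, hdiag i j h]
  have hDl : Ads⁻¹ * Ads = 1 := by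
    have h1 : Matrix.diagonal (fun i => (v i)⁻¹) * Ads = 1 := by
      rw [hD, Matrix.diagonal_mul_diagonal]
      rw [show (fun i => (v i)⁻¹ * v i) = fun _ => (1:ℝ) from funext fun i =>
        inv_mul_cancel₀ (hvne i), Matrix.diagonal_one]
    rw [Matrix.inv_eq_left_inv h1]; exact h1
  have hDinv : Ads⁻¹ = Matrix.diagonal (fun i => (v i)⁻¹) := by
    apply Matrix.inv_eq_left_inv
    rw [hD, Matrix.diagonal_mul_diagonal]
    rw [show (fun i => (v i)⁻¹ * v i) = fun _ => (1:ℝ) from funext fun i =>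
      inv_mul_cancel₀ (hvne i), Matrix.diagonal_one]
  have hDr : Ads * Ads⁻¹ = 1 := by
    rw [hDinv, hD, Matrix.diagonal_mul_diagonal]
    rw [show (fun i => v i * (v i)⁻¹) = fun _ => (1:ℝ) from funext fun i =>
      mul_inv_cancel₀ (hvne i), Matrix.diagonal_one]
  have hAdsnn : ∀ i j, 0 ≤ Ads i j := by
    intro i j
    by_cases h : i = j
    · subst h; exact le_of_lt (hvpos i)
    · rw [hdiag i j h]
  -- decomposition of A
  have hA_eq : A = diagPart A + offDiagPos A + Az + As := by
    have h : A - diagPart A - offDiagPos A = Az + As := hdecomp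
    calc A = diagPart A + offDiagPos A + (A - diagPart A - offDiagPos A) := by abel
    _ = diagPart A + offDiagPos A + Az + As := by rw [h]; abel
  have hApply : ∀ i j, A i j = diagPart A i j + offDiagPos A i j + Az i j + As i j := by
    intro i j
    conv_lhs => rw [hA_eq]
    simp [Matrix.add_apply]
  have hdgA : ∀ i, diagPart A i i = A i i := fun i => by
    simp [diagPart, Matrix.diagonal_apply_eq]
  have hge' : ∀ i, A i i ≤ v i := by
    intro i
    have := hge i i
    rwa [hdgA i] at this
  -- B = Ads + Az facts
  have hZB : ∀ i j, i ≠ j → (Ads + Az) i j ≤ 0 := by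
    intro i j h
    rw [Matrix.add_apply, hdiag i j h, zero_add]
    exact hAz i j
  have hBdet : IsUnit (Ads + Az).det := by
    rw [isUnit_iff_ne_zero]
    intro h0
    obtain ⟨x, hx0, hxz⟩ := (Matrix.exists_mulVec_eq_zero_iff).2 h0
    have hex : ∃ i, x i ≠ 0 := by
      by_contra h; push_neg at h; exact hx0 (funext fun i => h i)
    obtain ⟨i, hi⟩ := hex
    rcases lt_or_gt_of_ne hi with h | h
    · exact zmat_connected_noker hZB h1a h1c
        (by rw [Matrix.mulVec_neg, hxz, neg_zero]) i (by simpa using h)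
    · exact zmat_connected_noker hZB h1a h1c hxz i h
  have hrowB : ∀ i, 0 ≤ ∑ j, (Ads + Az) i j := by
    intro i; have := h1a i; rwa [mulVec_ones] at this
  have hBinv : ∀ i j, 0 ≤ (Ads + Az)⁻¹ i j := zmat_inv_nonneg hZB hrowB hBdet
  have hBii : ∀ i, 0 < (Ads + Az)⁻¹ i i := by
    intro i
    have h1 : ((Ads + Az)⁻¹ * (Ads + Az)) i i = 1 := by
      rw [Matrix.nonsing_inv_mul _ hBdet, Matrix.one_apply_eq]
    rw [Matrix.mul_apply] at h1
    have hsplit := Finset.add_sum_erase Finset.univ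
      (fun k => (Ads + Az)⁻¹ i k * (Ads + Az) k i) (Finset.mem_univ i)
    have hrest : ∑ k ∈ Finset.univ.erase i, (Ads + Az)⁻¹ i k * (Ads + Az) k i ≤ 0 := by
      apply Finset.sum_nonpos
      intro k hk
      have hki : k ≠ i := Finset.ne_of_mem_erase hk
      exact mul_nonpos_of_nonneg_of_nonpos (hBinv i k) (hZB k i hki)
    have hBiiv : (Ads + Az) i i = v i := by
      rw [Matrix.add_apply]
      have h3 := congrFun (congrFun hdecomp i) i
      simp only [offDiagNeg, offDiagPos, diagPart, Matrix.sub_apply, Matrix.add_apply,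
        Matrix.diagonal_apply_eq, Matrix.of_apply] at h3
      simp only [ne_eq, not_true_eq_false, false_and, if_false, sub_zero, sub_self] at h3
      have h4 : Az i i = 0 := le_antisymm (hAz i i) (by nlinarith [hAs i i])
      rw [h4, add_zero]
    have hd1 : 1 ≤ (Ads + Az)⁻¹ i i * v i := by
      rw [← hBiiv]
      nlinarith [hsplit, hrest, h1]
    nlinarith [hvpos i, hBinv i i]
  have hAzdiag : ∀ i, Az i i = 0 := by
    intro i
    have h3 := congrFun (congrFun hdecomp i) i
    simp only [offDiagNeg, offDiagPos, diagPart, Matrix.sub_apply, Matrix.add_apply,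
      Matrix.diagonal_apply_eq, Matrix.of_apply] at h3
    simp only [ne_eq, not_true_eq_false, false_and, if_false, sub_zero, sub_self] at h3
    exact le_antisymm (hAz i i) (by nlinarith [hAs i i])
  have hAsdiag : ∀ i, As i i = 0 := by
    intro i
    have h3 := congrFun (congrFun hdecomp i) i
    simp only [offDiagNeg, offDiagPos, diagPart, Matrix.sub_apply, Matrix.add_apply,
      Matrix.diagonal_apply_eq, Matrix.of_apply] at h3
    simp only [ne_eq, not_true_eq_false, false_and, if_false, sub_zero, sub_self] at h3
    exact le_antisymm (hAs i i) (by nlinarith [hAz i i])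
  -- the factorization
  have hBDC : (Ads + Az) * Ads⁻¹ * (Ads + As) = Ads + Az + As + Az * Ads⁻¹ * As := by
    have e1 : (Ads + Az) * Ads⁻¹ = 1 + Az * Ads⁻¹ := by rw [Matrix.add_mul, hDr]
    calc (Ads + Az) * Ads⁻¹ * (Ads + As) = (1 + Az * Ads⁻¹) * (Ads + As) := by rw [e1]
    _ = Ads + As + (Az * Ads⁻¹ * Ads + Az * Ads⁻¹ * As) := by
        rw [Matrix.add_mul, Matrix.one_mul, Matrix.mul_add]
    _ = Ads + Az + As + Az * Ads⁻¹ * As := by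
        rw [Matrix.mul_assoc Az Ads⁻¹ Ads, hDl, Matrix.mul_one]; abel
  set NN : Matrix (Fin n) (Fin n) ℝ := (Ads + Az) * Ads⁻¹ * (Ads + As) - A with hNNdef
  have hNN : ∀ i j, 0 ≤ NN i j := by
    intro i j
    rw [hNNdef, Matrix.sub_apply, hBDC]
    simp only [Matrix.add_apply]
    rw [hApply i j]
    have h4 : diagPart A i j ≤ Ads i j := hge i j
    have h5 := h2 i j
    linarith
  have hANN : A = (Ads + Az) * Ads⁻¹ * (Ads + As) - NN := by rw [hNNdef]; abel
  set HH : Matrix (Fin n) (Fin n) ℝ := Ads * (Ads + Az)⁻¹ * A with hHHdef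
  set MM : Matrix (Fin n) (Fin n) ℝ := Ads * (Ads + Az)⁻¹ * NN with hMMdef
  have hMMnn : ∀ i j, 0 ≤ MM i j := by
    rw [hMMdef]
    exact matmul_nonneg (matmul_nonneg hAdsnn hBinv) hNN
  have hHC : HH = (Ads + As) - MM := by
    rw [hHHdef, hMMdef]
    conv_lhs => rw [hANN]
    rw [Matrix.mul_sub]
    congr 1
    calc Ads * (Ads + Az)⁻¹ * ((Ads + Az) * Ads⁻¹ * (Ads + As))
        = Ads * ((Ads + Az)⁻¹ * ((Ads + Az) * (Ads⁻¹ * (Ads + As)))) := by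
          simp only [Matrix.mul_assoc]
    _ = Ads * (Ads⁻¹ * (Ads + As)) := by
          rw [Matrix.nonsing_inv_mul_cancel_left _ _ hBdet]
    _ = Ads + As := by rw [← Matrix.mul_assoc, hDr, Matrix.one_mul]
  have hHZ : ∀ i j, i ≠ j → HH i j ≤ 0 := by
    intro i j hij
    rw [hHC, Matrix.sub_apply, Matrix.add_apply, hdiag i j hij, zero_add]
    have := hMMnn i j
    have := hAs i j
    linarith
  have hdiagmv : ∀ (y : Fin n → ℝ) (i : Fin n), Ads.mulVec y i = v i * y i := by
    intro y i
    rw [hD, Matrix.mulVec, dotProduct]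
    rw [Finset.sum_eq_single i (fun b _ hb => by
      rw [Matrix.diagonal_apply_ne' _ hb, zero_mul]) (fun h => absurd (Finset.mem_univ i) h)]
    rw [Matrix.diagonal_apply_eq]
  have hDinvmv : ∀ (y : Fin n → ℝ) (i : Fin n), Ads⁻¹.mulVec y i = (v i)⁻¹ * y i := by
    intro y i
    rw [hDinv, Matrix.mulVec, dotProduct]
    rw [Finset.sum_eq_single i (fun b _ hb => by
      rw [Matrix.diagonal_apply_ne' _ hb, zero_mul]) (fun h => absurd (Finset.mem_univ i) h)]
    rw [Matrix.diagonal_apply_eq]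
  have hHcomp : ∀ y : Fin n → ℝ, HH.mulVec y =
      Ads.mulVec ((Ads + Az)⁻¹.mulVec (A.mulVec y)) := by
    intro y
    rw [Matrix.mulVec_mulVec, Matrix.mulVec_mulVec, hHHdef]
  set u : Fin n → ℝ := (Ads + Az)⁻¹.mulVec (A.mulVec (fun _ => 1)) with hu
  clear_value u
  have hunn : ∀ i, 0 ≤ u i := by
    intro i
    rw [hu, Matrix.mulVec, dotProduct]
    exact Finset.sum_nonneg fun k _ => mul_nonneg (hBinv i k) (hrow k)
  have huge : ∀ i, (Ads + Az)⁻¹ i i * (A.mulVec (fun _ => 1)) i ≤ u i := by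
    intro i
    rw [hu, Matrix.mulVec, dotProduct]
    exact Finset.single_le_sum (fun k _ => mul_nonneg (hBinv i k) (hrow k))
      (Finset.mem_univ i)
  have hH1 : ∀ i, HH.mulVec (fun _ => 1) i = v i * u i := by
    intro i
    rw [hHcomp, hdiagmv, hu]
  have hH1nn : ∀ i, 0 ≤ HH.mulVec (fun _ => 1) i := by
    intro i
    rw [hH1]
    exact mul_nonneg (le_of_lt (hvpos i)) (hunn i)
  have hH1z : ∀ i, HH.mulVec (fun _ => 1) i = 0 → A.mulVec (fun _ => 1) i = 0 := by
    intro i h0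
    rw [hH1] at h0
    have hui : u i = 0 := by
      rcases mul_eq_zero.1 h0 with h | h
      · exact absurd h (hvne i)
      · exact h
    have h5 := huge i
    rw [hui] at h5
    nlinarith [hBii i, hrow i]
  -- kernel argument: A *ᵥ x = 0 has no solution with a positive entry
  have key : ∀ x : Fin n → ℝ, A.mulVec x = 0 → ∀ i₀, 0 < x i₀ → False := by
    intro x hx i₀ hpos
    obtain ⟨im, -, hmax⟩ := Finset.exists_max_image Finset.univ x ⟨i₀, Finset.mem_univ _⟩
    set m := x im with hmdef
    clear_value m
    have hm : 0 < m := lt_of_lt_of_le hpos (hmax i₀ (Finset.mem_univ _))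
    set d : Fin n → ℝ := fun j => m - x j with hddef
    clear_value d
    have hd0 : ∀ j, 0 ≤ d j := fun j => by
      have := hmax j (Finset.mem_univ _)
      simp only [hddef]; linarith
    have hdfun : d = m • (fun _ => (1:ℝ)) - x := funext fun j => by
      simp [hddef]
    have hAd : A.mulVec d = m • A.mulVec (fun _ => 1) := by
      rw [hdfun, Matrix.mulVec_sub, Matrix.mulVec_smul, hx, sub_zero]
    have hHd : HH.mulVec d = m • HH.mulVec (fun _ => 1) := by
      rw [hHcomp d, hAd, Matrix.mulVec_smul, Matrix.mulVec_smul, ← hHcomp (fun _ => 1)]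
    set Cd : Fin n → ℝ := (Ads + As).mulVec d with hCddef
    clear_value Cd
    have hCdform : Cd = HH.mulVec d + MM.mulVec d := by
      rw [hCddef, show (Ads + As) = HH + MM from by rw [hHC]; abel, Matrix.add_mulVec]
    have hMMd : ∀ k, 0 ≤ MM.mulVec d k := fun k => by
      rw [Matrix.mulVec, dotProduct]
      exact Finset.sum_nonneg fun j _ => mul_nonneg (hMMnn k j) (hd0 j)
    have hCdge : ∀ k, m * HH.mulVec (fun _ => 1) k ≤ Cd k := by
      intro k
      rw [hCdform, Pi.add_apply, hHd, Pi.smul_apply, smul_eq_mul]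
      linarith [hMMd k]
    have hCdnn : ∀ k, 0 ≤ Cd k := fun k =>
      le_trans (mul_nonneg hm.le (hH1nn k)) (hCdge k)
    have hGA : ∀ i, Cd i = 0 → A.mulVec (fun _ => 1) i = 0 := by
      intro i h0
      have h5 := hCdge i
      rw [h0] at h5
      have h6 : HH.mulVec (fun _ => 1) i = 0 := by nlinarith [hH1nn i]
      exact hH1z i h6
    have hAsd_np : ∀ k, (As.mulVec d) k ≤ 0 := fun k => by
      rw [Matrix.mulVec, dotProduct]
      exact Finset.sum_nonpos fun j _ => mul_nonpos_iff.2 (Or.inr ⟨hAs k j, hd0 j⟩)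
    have hCk : ∀ k, Cd k = v k * d k + (As.mulVec d) k := by
      intro k
      rw [hCddef, Matrix.add_mulVec, Pi.add_apply, hdiagmv]
    have hkeyineq : ∀ i, A.mulVec (fun _ => 1) i = 0 →
        (∑ k, (-Az i k) * ((v k)⁻¹ * Cd k)) + (-(As.mulVec d i)) ≤ A i i * d i := by
      intro i hrAi
      have h0 : A.mulVec d i = 0 := by
        rw [hAd, Pi.smul_apply, hrAi, smul_zero]
      have hdgmv : (diagPart A).mulVec d i = A i i * d i := by
        rw [diagPart, Matrix.mulVec, dotProduct]
        rw [Finset.sum_eq_single i (fun b _ hb => by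
          rw [Matrix.diagonal_apply_ne' _ hb, zero_mul])
          (fun h => absurd (Finset.mem_univ i) h)]
        rw [Matrix.diagonal_apply_eq]
      have hexp : A.mulVec d i = A i i * d i + (offDiagPos A).mulVec d i
          + Az.mulVec d i + As.mulVec d i := by
        conv_lhs => rw [hA_eq]
        rw [Matrix.add_mulVec, Matrix.add_mulVec, Matrix.add_mulVec]
        simp only [Pi.add_apply]
        rw [hdgmv]
      have hodp : (offDiagPos A).mulVec d i ≤ (Az * Ads⁻¹ * As).mulVec d i := by
        rw [Matrix.mulVec, Matrix.mulVec, dotProduct, dotProduct]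
        exact Finset.sum_le_sum fun j _ => mul_le_mul_of_nonneg_right (h2 i j) (hd0 j)
      have hP : (Az * Ads⁻¹ * As).mulVec d i
          = ∑ k, Az i k * ((v k)⁻¹ * (As.mulVec d) k) := by
        rw [← Matrix.mulVec_mulVec, ← Matrix.mulVec_mulVec]
        show ∑ k, Az i k * (Ads⁻¹.mulVec (As.mulVec d)) k = _
        exact Finset.sum_congr rfl fun k _ => by rw [hDinvmv]
      have hsum1 : ∑ k, (-Az i k) * ((v k)⁻¹ * Cd k)
          = (∑ k, -(Az i k * d k)) + ∑ k, -(Az i k * ((v k)⁻¹ * (As.mulVec d) k)) := by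
        rw [← Finset.sum_add_distrib]
        refine Finset.sum_congr rfl fun k _ => ?_
        rw [hCk k]
        have hvk := hvne k
        field_simp
        ring
      have hAzdsum : ∑ k, -(Az i k * d k) = -(Az.mulVec d i) := by
        rw [Matrix.mulVec, dotProduct, ← Finset.sum_neg_distrib]
      have hPneg : ∑ k, -(Az i k * ((v k)⁻¹ * (As.mulVec d) k))
          = -((Az * Ads⁻¹ * As).mulVec d i) := by
        rw [hP, ← Finset.sum_neg_distrib]
      rw [hexp] at h0
      linarith [h0, hodp, hsum1, hAzdsum, hPneg]
    have hU1 : ∀ i, Cd i = 0 → ∀ j, Az i j ≠ 0 → Cd j = 0 := by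
      intro i hCdi j hAzij
      have hki := hkeyineq i (hGA i hCdi)
      have hAiid : A i i * d i ≤ -(As.mulVec d i) := by
        have h5 : A i i * d i ≤ v i * d i := mul_le_mul_of_nonneg_right (hge' i) (hd0 i)
        have h6 := hCk i
        rw [hCdi] at h6
        linarith
      have htnn : ∀ k ∈ Finset.univ, 0 ≤ (-Az i k) * ((v k)⁻¹ * Cd k) := fun k _ =>
        mul_nonneg (neg_nonneg.2 (hAz i k))
          (mul_nonneg (inv_nonneg.2 (hvpos k).le) (hCdnn k))
      have hsum0 : ∑ k, (-Az i k) * ((v k)⁻¹ * Cd k) = 0 :=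
        le_antisymm (by linarith) (Finset.sum_nonneg htnn)
      have hj := (Finset.sum_eq_zero_iff_of_nonneg htnn).1 hsum0 j (Finset.mem_univ j)
      rcases mul_eq_zero.1 hj with h | h
      · exact absurd (neg_eq_zero.1 h) hAzij
      · rcases mul_eq_zero.1 h with h' | h'
        · exact absurd h' (inv_ne_zero (hvne j))
        · exact h'
    have hU2 : ∀ i, Cd i = 0 → d i = 0 → ∀ j, As i j ≠ 0 → (d j = 0 ∧ Cd j = 0) := by
      intro i hCdi hdi j hAsij
      have hki := hkeyineq i (hGA i hCdi)
      have hsnn : 0 ≤ ∑ k, (-Az i k) * ((v k)⁻¹ * Cd k) :=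
        Finset.sum_nonneg fun k _ => mul_nonneg (neg_nonneg.2 (hAz i k))
          (mul_nonneg (inv_nonneg.2 (hvpos k).le) (hCdnn k))
      have hz : A i i * d i = 0 := by rw [hdi, mul_zero]
      have hAsdi : (As.mulVec d) i = 0 := by
        have h7 := hAsd_np i
        linarith
      have hterm2 : ∀ k ∈ Finset.univ, 0 ≤ -(As i k * d k) := fun k _ => by
        have := mul_nonpos_iff.2 (Or.inr ⟨hAs i k, hd0 k⟩)
        linarith
      have hsum2 : ∑ k, -(As i k * d k) = 0 := by
        have : (As.mulVec d) i = ∑ k, As i k * d k := by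
          rw [Matrix.mulVec, dotProduct]
        rw [Finset.sum_neg_distrib, ← this, hAsdi, neg_zero]
      have hj := (Finset.sum_eq_zero_iff_of_nonneg hterm2).1 hsum2 j (Finset.mem_univ j)
      have hdj : d j = 0 := by
        have h8 : As i j * d j = 0 := by linarith
        rcases mul_eq_zero.1 h8 with h | h
        · exact absurd h hAsij
        · exact h
      refine ⟨hdj, ?_⟩
      have h9 := hCk j
      rw [hdj, mul_zero, zero_add] at h9
      have := hAsd_np j
      have := hCdnn j
      linarith
    have hdim : d im = 0 := by simp [hddef, hmdef]
    have hCdim : Cd im = 0 := by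
      have h8 := hCk im
      rw [hdim, mul_zero, zero_add] at h8
      have := hAsd_np im
      have := hCdnn im
      linarith
    rcases h3 with hc | hc
    · obtain ⟨r, hr, p, hp0, hpr, hstep⟩ := hc im (hGA im hCdim)
      have hind : ∀ k, k ≤ r → Cd (p k) = 0 := by
        intro k
        induction k with
        | zero => intro _; rw [hp0]; exact hCdim
        | succ k ih =>
          intro hk
          have ha := ih (Nat.le_of_succ_le hk)
          have hb := hstep (k + 1) (Nat.succ_le_succ (Nat.zero_le k)) hk
          simp only [Nat.add_sub_cancel] at hb
          exact hU1 _ ha _ hb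
      have h9 := hGA _ (hind r le_rfl)
      have h10 : 0 < A.mulVec (fun _ => 1) (p r) := hpr
      linarith
    · obtain ⟨r, hr, p, hp0, hpr, hstep⟩ := hc im (hGA im hCdim)
      have hind : ∀ k, k ≤ r → d (p k) = 0 ∧ Cd (p k) = 0 := by
        intro k
        induction k with
        | zero => intro _; rw [hp0]; exact ⟨hdim, hCdim⟩
        | succ k ih =>
          intro hk
          obtain ⟨ha, ha'⟩ := ih (Nat.le_of_succ_le hk)
          have hb := hstep (k + 1) (Nat.succ_le_succ (Nat.zero_le k)) hk
          simp only [Nat.add_sub_cancel] at hb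
          exact hU2 _ ha' ha _ hb
      have h9 := hGA _ (hind r le_rfl).2
      have h10 : 0 < A.mulVec (fun _ => 1) (p r) := hpr
      linarith
  -- conclusion
  have hAdet : IsUnit A.det := by
    rw [isUnit_iff_ne_zero]
    intro h0
    obtain ⟨x, hx0, hxz⟩ := (Matrix.exists_mulVec_eq_zero_iff).2 h0
    obtain ⟨i, hi⟩ : ∃ i, x i ≠ 0 := by
      by_contra h; push_neg at h; exact hx0 (funext h)
    rcases lt_or_gt_of_ne hi with h | h
    · exact key (-x) (by rw [Matrix.mulVec_neg, hxz, neg_zero]) i (by simpa using h)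
    · exact key x hxz i h
  have hHdet : IsUnit HH.det := by
    rw [hHHdef, Matrix.det_mul, Matrix.det_mul]
    refine (IsUnit.mul ?_ ?_).mul hAdet
    · rw [hD, Matrix.det_diagonal, isUnit_iff_ne_zero]
      exact Finset.prod_ne_zero_iff.2 fun i _ => hvne i
    · rw [Matrix.det_nonsing_inv]
      exact isUnit_ringInverse.2 hBdet
  have hrowHH : ∀ i, 0 ≤ ∑ j, HH i j := fun i => by
    have := hH1nn i; rwa [mulVec_ones] at this
  have hHHinv : ∀ i j, 0 ≤ HH⁻¹ i j := zmat_inv_nonneg hHZ hrowHH hHdet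
  have hAinv : A⁻¹ = HH⁻¹ * (Ads * (Ads + Az)⁻¹) := by
    apply Matrix.inv_eq_left_inv
    calc HH⁻¹ * (Ads * (Ads + Az)⁻¹) * A
        = HH⁻¹ * (Ads * (Ads + Az)⁻¹ * A) := by rw [Matrix.mul_assoc]
    _ = HH⁻¹ * HH := by rw [← hHHdef]
    _ = 1 := Matrix.nonsing_inv_mul _ hHdet
  refine ⟨hAdet, fun i j => ?_⟩
  rw [hAinv]
  exact matmul_nonneg hHHinv (matmul_nonneg hAdsnn hBinv) i j
end
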